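/- arXiv:1304.7997 — 2 statements merged into one kernel-verified Lean document; each statement's English description precedes it below -/
import Mathlib

section
/- The Sprague-Grundy value of the odd/odd vertex removal game on a finite bipartite graph G equals 1 if G has an odd number of edges and 0 if G has an even number of edges. -/
open scoped Classical

/-- minimal excludant of a set of naturals -/
noncomputable def mexN (s : Set ℕ) : ℕ := sInf {n | n ∉ s}

/-- delete a vertex's incident edges (the vertex becomes isolated) -/
def delVert {V : Type*} (G : SimpleGraph V) (v : V) : SimpleGraph V where
  Adj a b := G.Adj a b ∧ a ≠ v ∧ b ≠ v
  symm := ⟨fun a b h => ⟨h.1.symm, h.2.2, h.2.1⟩⟩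
  loopless := ⟨fun a h => G.loopless.irrefl a h.1⟩

lemma delVert_le {V : Type*} (G : SimpleGraph V) (v : V) : delVert G v ≤ G := fun _ _ h => h.1

noncomputable def edgeCard {V : Type*} [Fintype V] (G : SimpleGraph V) : ℕ := G.edgeFinset.card

lemma edgeCard_lt {V : Type*} [Fintype V] (G : SimpleGraph V) {v : V} (h : Odd (G.degree v)) :
    edgeCard (delVert G v) < edgeCard G := by
  apply Finset.card_lt_card
  rw [Finset.ssubset_iff_of_subset (SimpleGraph.edgeFinset_subset_edgeFinset.2 (delVert_le G v))]
  obtain ⟨w, hw⟩ := (G.degree_pos_iff_exists_adj v).1 h.pos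
  refine ⟨s(v, w), ?_, ?_⟩
  · simpa [SimpleGraph.mem_edgeFinset] using hw
  · intro hc
    have := SimpleGraph.mem_edgeFinset.1 hc
    rw [SimpleGraph.mem_edgeSet] at this
    exact this.2.1 rfl

noncomputable def grundy {V : Type*} [Fintype V] (G : SimpleGraph V) : ℕ :=
  mexN {n | ∃ v : {v : V // Odd (G.degree v)}, grundy (delVert G v.1) = n}
termination_by edgeCard G
decreasing_by exact edgeCard_lt G v.2

/- ### auxiliary lemmas -/

lemma mexN_eq_zero {s : Set ℕ} (h : 0 ∉ s) : mexN s = 0 :=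
  Nat.sInf_eq_zero.2 (Or.inl h)

lemma mexN_singleton_zero : mexN {0} = 1 := by
  have h1 : (1 : ℕ) ∈ {n | n ∉ ({0} : Set ℕ)} := by simp
  have hle := Nat.sInf_le h1
  have hne : sInf {n | n ∉ ({0} : Set ℕ)} ≠ 0 := by
    intro h0
    have := Nat.sInf_mem (⟨1, h1⟩ : {n | n ∉ ({0} : Set ℕ)}.Nonempty)
    rw [h0] at this
    simp at this
  unfold mexN
  omega

lemma edgeCard_delVert {V : Type*} [Fintype V] (G : SimpleGraph V) (v : V) :
    edgeCard (delVert G v) + G.degree v = edgeCard G := by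
  classical
  have hsub : G.incidenceFinset v ⊆ G.edgeFinset := by
    intro e he
    rw [SimpleGraph.mem_incidenceFinset] at he
    exact SimpleGraph.mem_edgeFinset.2 (G.incidenceSet_subset v he)
  have heq : (delVert G v).edgeFinset = G.edgeFinset \ G.incidenceFinset v := by
    ext e
    induction e with
    | _ a b =>
      simp only [SimpleGraph.mem_edgeFinset, Finset.mem_sdiff,
        SimpleGraph.mem_incidenceFinset, SimpleGraph.mk'_mem_incidenceSet_iff,
        SimpleGraph.mem_edgeSet]
      show (G.Adj a b ∧ a ≠ v ∧ b ≠ v) ↔ _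
      constructor
      · rintro ⟨h, ha, hb⟩
        exact ⟨h, fun hc => hc.2.elim (fun h' => ha h'.symm) (fun h' => hb h'.symm)⟩
      · rintro ⟨h, hc⟩
        refine ⟨h, ?_, ?_⟩ <;> intro h' <;> exact hc ⟨h, by subst h'; tauto⟩
  rw [edgeCard, edgeCard, heq, ← G.card_incidenceFinset_eq_degree,
    Finset.card_sdiff_add_card_eq_card hsub]

lemma fin2_cases (x y : Fin 2) (h : x ≠ y) : x = 0 ∨ y = 0 := by
  revert h; revert x y; decide

lemma sum_deg_part {V : Type*} [Fintype V] (G : SimpleGraph V) (c : G.Coloring (Fin 2)) :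
    ∑ v ∈ Finset.univ.filter (fun v => c v = 0), G.degree v = G.edgeFinset.card := by
  classical
  have hdeg : ∀ v : V, G.degree v = (G.edgeFinset.filter (fun e => v ∈ e)).card := by
    intro v
    rw [← G.card_incidenceFinset_eq_degree, SimpleGraph.incidenceFinset_eq_filter]
  simp_rw [hdeg, Finset.card_filter]
  rw [Finset.sum_comm]
  have hone : ∀ e ∈ G.edgeFinset,
      (∑ v ∈ Finset.univ.filter (fun v => c v = 0), if v ∈ e then 1 else 0) = 1 := by
    intro e he
    induction e with
    | _ a b =>
      rw [SimpleGraph.mem_edgeFinset, SimpleGraph.mem_edgeSet] at he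
      have hne := c.valid he
      rw [← Finset.card_filter]
      rcases fin2_cases _ _ hne with h0 | h0
      · have : (Finset.univ.filter (fun v => c v = 0)).filter (fun v => v ∈ s(a, b)) = {a} := by
          ext w
          simp only [Finset.mem_filter, Finset.mem_univ, true_and, Sym2.mem_iff,
            Finset.mem_singleton]
          constructor
          · rintro ⟨hw, rfl | rfl⟩
            · rfl
            · exact absurd (h0 ▸ hw.symm) hne
          · rintro rfl; exact ⟨h0, Or.inl rfl⟩
        rw [this, Finset.card_singleton]
      · have : (Finset.univ.filter (fun v => c v = 0)).filter (fun v => v ∈ s(a, b)) = {b} := by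
          ext w
          simp only [Finset.mem_filter, Finset.mem_univ, true_and, Sym2.mem_iff,
            Finset.mem_singleton]
          constructor
          · rintro ⟨hw, rfl | rfl⟩
            · exact absurd (h0 ▸ hw) hne
            · rfl
          · rintro rfl; exact ⟨h0, Or.inr rfl⟩
        rw [this, Finset.card_singleton]
  rw [Finset.sum_congr rfl hone, Finset.sum_const, smul_eq_mul, mul_one]

lemma exists_odd_degree {V : Type*} [Fintype V] (G : SimpleGraph V) (hb : G.Colorable 2)
    (h : Odd G.edgeFinset.card) : ∃ v : V, Odd (G.degree v) := by
  by_contra hc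
  push_neg at hc
  simp only [Nat.not_odd_iff_even] at hc
  obtain ⟨c⟩ := hb
  have hsum := sum_deg_part G c
  have heven : Even (∑ v ∈ Finset.univ.filter (fun v => c v = 0), G.degree v) :=
    Finset.even_sum _ fun v _ => hc v
  rw [hsum] at heven
  exact (Nat.not_odd_iff_even.2 heven) h

lemma delVert_colorable {V : Type*} [Fintype V] (G : SimpleGraph V) (v : V)
    (hb : G.Colorable 2) : (delVert G v).Colorable 2 :=
  hb.elim fun c => ⟨SimpleGraph.Coloring.mk c fun hadj => c.valid (delVert_le G v hadj)⟩

lemma grundy_eq {V : Type*} [Fintype V] (G : SimpleGraph V) (hb : G.Colorable 2) :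
    grundy G = if Odd (edgeCard G) then 1 else 0 := by
  rw [grundy]
  by_cases hodd : Odd (edgeCard G)
  · obtain ⟨v, hv⟩ := exists_odd_degree G hb hodd
    have hset : {n | ∃ w : {w : V // Odd (G.degree w)}, grundy (delVert G w.1) = n}
        = ({0} : Set ℕ) := by
      ext n
      simp only [Set.mem_setOf_eq, Set.mem_singleton_iff]
      constructor
      · rintro ⟨w, rfl⟩
        rw [grundy_eq (delVert G w.1) (delVert_colorable G w.1 hb)]
        have h1 := edgeCard_delVert G w.1
        have h2 := w.2
        rw [Nat.odd_iff] at h2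
        rw [Nat.odd_iff] at hodd
        rw [if_neg (by simp only [Nat.odd_iff]; omega)]
      · rintro rfl
        refine ⟨⟨v, hv⟩, ?_⟩
        rw [grundy_eq (delVert G v) (delVert_colorable G v hb)]
        have h1 := edgeCard_delVert G v
        rw [Nat.odd_iff] at hodd
        have hv' := hv
        rw [Nat.odd_iff] at hv'
        rw [if_neg (by simp only [Nat.odd_iff]; omega)]
    rw [hset, mexN_singleton_zero, if_pos hodd]
  · rw [if_neg hodd]
    apply mexN_eq_zero
    rintro ⟨w, hw⟩
    rw [grundy_eq (delVert G w.1) (delVert_colorable G w.1 hb)] at hw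
    have h1 := edgeCard_delVert G w.1
    have h2 := w.2
    rw [Nat.odd_iff] at h2
    rw [Nat.not_odd_iff_even, Nat.even_iff] at hodd
    rw [if_pos (by rw [Nat.odd_iff]; omega)] at hw
    exact one_ne_zero hw
termination_by edgeCard G
decreasing_by
  · exact edgeCard_lt G w.2
  · exact edgeCard_lt G hv
  · exact edgeCard_lt G w.2

/-- The Grundy value of the odd/odd vertex removal game on a finite bipartite
graph `G` is 1 if `G` has an odd number of edges and 0 otherwise. -/
theorem grundy_bipartite {V : Type*} [Fintype V] (G : SimpleGraph V)
    (hb : G.Colorable 2) :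
    grundy G = if Odd G.edgeFinset.card then 1 else 0 :=
  grundy_eq G hb
end

section
/- For every natural number k there exists a finite connected graph G such that the Grundy value of the odd/odd vertex removal game on G equals k. -/
open scoped Classical

lemma grundy_def' {V : Type*} [Fintype V] (G : SimpleGraph V) :
    grundy G = mexN {n | ∃ v : {v : V // Odd (G.degree v)}, grundy (delVert G v.1) = n} := by
  rw [grundy]

lemma mexN_empty : mexN (∅ : Set ℕ) = 0 :=
  Nat.sInf_eq_zero.2 (Or.inl (by simp))

lemma mexN_Iio (k : ℕ) : mexN (Set.Iio k) = k := by
  unfold mexN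
  have h1 : {n | n ∉ Set.Iio k} = Set.Ici k := by ext n; simp [Set.mem_Iio, Set.mem_Ici, not_lt]
  rw [h1]
  exact csInf_Ici

lemma grundy_eq_zero {V : Type*} [Fintype V] (G : SimpleGraph V)
    (h : ∀ v, ¬ Odd (G.degree v)) : grundy G = 0 := by
  rw [grundy_def']
  convert mexN_empty
  ext n
  simp only [Set.mem_setOf_eq, Set.mem_empty_iff_false, iff_false]
  rintro ⟨⟨v, hv⟩, -⟩
  exact h v hv

lemma delVert_adj {V : Type*} (G : SimpleGraph V) (v a b : V) :
    (delVert G v).Adj a b ↔ G.Adj a b ∧ a ≠ v ∧ b ≠ v := Iff.rfl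

lemma grundy_congr_aux (N : ℕ) : ∀ {V W : Type*} [Fintype V] [Fintype W]
    (G : SimpleGraph V) (H : SimpleGraph W) (e : V → W), Function.Injective e →
    (∀ a b, H.Adj (e a) (e b) ↔ G.Adj a b) →
    (∀ w, (∀ a, e a ≠ w) → Even (H.degree w)) →
    (∀ w, (∀ a, e a ≠ w) → ∀ a, ¬ H.Adj w (e a)) →
    edgeCard G < N → grundy H = grundy G := by
  induction N with
  | zero => intro _ _ _ _ _ _ _ _ _ _ _ h; omega
  | succ N ih =>
    intro V W _ _ G H e he hadj hdE hdA hlt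
    have hnb : ∀ a, H.neighborFinset (e a) = (G.neighborFinset a).map ⟨e, he⟩ := by
      intro a
      ext w
      rw [SimpleGraph.mem_neighborFinset, Finset.mem_map]
      constructor
      · intro h
        by_cases hw : ∃ b, e b = w
        · obtain ⟨b, rfl⟩ := hw
          exact ⟨b, SimpleGraph.mem_neighborFinset _ _ _ |>.2 ((hadj a b).1 h), rfl⟩
        · push_neg at hw
          exact absurd h.symm (hdA w hw a)
      · rintro ⟨b, hb, rfl⟩
        exact (hadj a b).2 (SimpleGraph.mem_neighborFinset _ _ _ |>.1 hb)
    have hdeg : ∀ a, H.degree (e a) = G.degree a := by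
      intro a
      rw [SimpleGraph.degree, SimpleGraph.degree, hnb, Finset.card_map]
    have key : ∀ a, Odd (G.degree a) → grundy (delVert H (e a)) = grundy (delVert G a) := by
      intro a ha
      refine ih (delVert G a) (delVert H (e a)) e he ?_ ?_ ?_ ?_
      · intro b c
        rw [delVert_adj, delVert_adj, hadj, he.ne_iff, he.ne_iff]
      · intro w hw
        have : (delVert H (e a)).neighborFinset w = H.neighborFinset w := by
          ext u
          rw [SimpleGraph.mem_neighborFinset, SimpleGraph.mem_neighborFinset, delVert_adj]
          constructor
          · exact fun h => h.1
          · intro h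
            refine ⟨h, (hw a).symm, ?_⟩
            rintro rfl
            exact hdA w hw a h
        rw [SimpleGraph.degree, this]
        exact hdE w hw
      · intro w hw b hb
        exact hdA w hw b hb.1
      · exact lt_of_lt_of_le (edgeCard_lt G ha) (Nat.lt_succ_iff.1 hlt)
    rw [grundy_def' G, grundy_def' H]
    congr 1
    ext m
    simp only [Set.mem_setOf_eq]
    constructor
    · rintro ⟨⟨w, hw⟩, rfl⟩
      have : ∃ a, e a = w := by
        by_contra hc
        push_neg at hc
        rw [← Nat.not_even_iff_odd] at hw -- deprecated ok
        exact hw (hdE w hc)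
      obtain ⟨a, rfl⟩ := this
      have ha : Odd (G.degree a) := by rw [← hdeg]; exact hw
      exact ⟨⟨a, ha⟩, (key a ha).symm⟩
    · rintro ⟨⟨a, ha⟩, rfl⟩
      exact ⟨⟨e a, by rw [hdeg]; exact ha⟩, key a ha⟩

lemma grundy_congr {V W : Type*} [Fintype V] [Fintype W]
    (G : SimpleGraph V) (H : SimpleGraph W) (e : V → W) (he : Function.Injective e)
    (hadj : ∀ a b, H.Adj (e a) (e b) ↔ G.Adj a b)
    (hdE : ∀ w, (∀ a, e a ≠ w) → Even (H.degree w))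
    (hdA : ∀ w, (∀ a, e a ≠ w) → ∀ a, ¬ H.Adj w (e a)) :
    grundy H = grundy G :=
  grundy_congr_aux (edgeCard G + 1) G H e he hadj hdE hdA (Nat.lt_succ_self _)

lemma exists_odd_of_grundy_ne_zero {V : Type*} [Fintype V] (G : SimpleGraph V)
    (h : grundy G ≠ 0) : ∃ v, Odd (G.degree v) := by
  by_contra hc
  push_neg at hc
  exact h (grundy_eq_zero G (by simpa using hc))

lemma delVert_nbhd_self {V : Type*} [Fintype V] (G : SimpleGraph V) (u : V) :
    (delVert G u).neighborFinset u = ∅ := by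
  ext w; simp [SimpleGraph.mem_neighborFinset, delVert_adj]

lemma delVert_degree_self {V : Type*} [Fintype V] (G : SimpleGraph V) (u : V) :
    (delVert G u).degree u = 0 := by
  rw [SimpleGraph.degree, delVert_nbhd_self]; rfl

lemma delVert_nbhd_of_ne {V : Type*} [Fintype V] (G : SimpleGraph V) {u v : V} (h : v ≠ u) :
    (delVert G u).neighborFinset v = (G.neighborFinset v).erase u := by
  ext w
  simp only [SimpleGraph.mem_neighborFinset, delVert_adj, Finset.mem_erase]
  constructor
  · rintro ⟨h1, -, h3⟩; exact ⟨h3, h1⟩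
  · rintro ⟨h3, h1⟩; exact ⟨h1, h, h3⟩

lemma delVert_degree_of_adj {V : Type*} [Fintype V] (G : SimpleGraph V) {u v : V}
    (h : G.Adj v u) : (delVert G u).degree v = G.degree v - 1 := by
  rw [SimpleGraph.degree, delVert_nbhd_of_ne G (G.ne_of_adj h),
    Finset.card_erase_of_mem (by simpa [SimpleGraph.mem_neighborFinset] using h)]
  rfl

lemma delVert_degree_of_not_adj {V : Type*} [Fintype V] (G : SimpleGraph V) {u v : V}
    (hne : v ≠ u) (h : ¬ G.Adj v u) : (delVert G u).degree v = G.degree v := by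
  rw [SimpleGraph.degree, delVert_nbhd_of_ne G hne,
    Finset.erase_eq_of_notMem (by simpa [SimpleGraph.mem_neighborFinset] using h)]
  rfl

section Big

variable {c : ℕ} (n : Fin c → ℕ) (H : ∀ i : Fin c, SimpleGraph (Fin (n i))) (m : ℕ)

def bigG : SimpleGraph ((Σ i : Fin c, Fin (n i)) ⊕ Fin m) where
  Adj x y :=
    match x, y with
    | Sum.inl a, Sum.inl b => ∃ h : a.1 = b.1, (H a.1).Adj a.2 (Fin.cast (congrArg n h.symm) b.2)
    | Sum.inl a, Sum.inr t => (t : ℕ) = (a.1 : ℕ) + 1 ∧ Odd ((H a.1).degree a.2)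
    | Sum.inr t, Sum.inl a => (t : ℕ) = (a.1 : ℕ) + 1 ∧ Odd ((H a.1).degree a.2)
    | Sum.inr s, Sum.inr t => s ≠ t
  symm := by
    constructor
    rintro (⟨i, w⟩ | s) (⟨i', w'⟩ | t) h
    · obtain ⟨hi, hadj⟩ := h
      dsimp only at hi
      subst hi
      exact ⟨rfl, hadj.symm⟩
    · exact h
    · exact h
    · exact Ne.symm h
  loopless := by
    constructor
    rintro (⟨i, w⟩ | s) h
    · exact (H i).loopless.irrefl w (h.elim fun _ hh => hh)
    · exact h rfl

lemma bigG_adj_inl_inl (a b : Σ i : Fin c, Fin (n i)) :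
    (bigG n H m).Adj (Sum.inl a) (Sum.inl b) ↔
      ∃ h : a.1 = b.1, (H a.1).Adj a.2 (Fin.cast (congrArg n h.symm) b.2) := Iff.rfl

lemma bigG_adj_inr_inl (t : Fin m) (a : Σ i : Fin c, Fin (n i)) :
    (bigG n H m).Adj (Sum.inr t) (Sum.inl a) ↔
      (t : ℕ) = (a.1 : ℕ) + 1 ∧ Odd ((H a.1).degree a.2) := Iff.rfl

lemma bigG_adj_inl_inr (a : Σ i : Fin c, Fin (n i)) (t : Fin m) :
    (bigG n H m).Adj (Sum.inl a) (Sum.inr t) ↔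
      (t : ℕ) = (a.1 : ℕ) + 1 ∧ Odd ((H a.1).degree a.2) := Iff.rfl

lemma bigG_adj_inr_inr (s t : Fin m) :
    (bigG n H m).Adj (Sum.inr s) (Sum.inr t) ↔ s ≠ t := Iff.rfl


lemma nbhd_inr (t : Fin m) :
    (bigG n H m).neighborFinset (Sum.inr t) =
      ((Finset.univ.erase t).map ⟨Sum.inr, Sum.inr_injective⟩) ∪
      ((Finset.univ.filter fun x : Σ i : Fin c, Fin (n i) =>
          (t : ℕ) = (x.1 : ℕ) + 1 ∧ Odd ((H x.1).degree x.2)).map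
        ⟨Sum.inl, Sum.inl_injective⟩) := by
  ext v
  rcases v with a | u
  · simp [SimpleGraph.mem_neighborFinset, bigG_adj_inr_inl]
  · simp only [SimpleGraph.mem_neighborFinset, bigG_adj_inr_inr, Finset.mem_union,
      Finset.mem_map, Finset.mem_erase, Finset.mem_univ, and_true,
      Function.Embedding.coeFn_mk, Finset.mem_filter]
    constructor
    · intro h
      exact Or.inl ⟨u, Ne.symm h, rfl⟩
    · rintro (⟨x, hx, hx2⟩ | ⟨x, -, hx2⟩)
      · cases hx2; exact Ne.symm hx
      · exact absurd hx2 (by simp)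

lemma degree_inr (t : Fin m) :
    (bigG n H m).degree (Sum.inr t) = (m - 1) +
      (Finset.univ.filter fun x : Σ i : Fin c, Fin (n i) =>
          (t : ℕ) = (x.1 : ℕ) + 1 ∧ Odd ((H x.1).degree x.2)).card := by
  rw [SimpleGraph.degree, nbhd_inr, Finset.card_union_of_disjoint, Finset.card_map,
    Finset.card_map, Finset.card_erase_of_mem (Finset.mem_univ t), Finset.card_univ,
    Fintype.card_fin]
  · rw [Finset.disjoint_left]
    rintro x hx1 hx2
    simp only [Finset.mem_map, Function.Embedding.coeFn_mk] at hx1 hx2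
    obtain ⟨a, -, rfl⟩ := hx1
    obtain ⟨b, -, hb⟩ := hx2
    exact absurd hb (by simp)

lemma even_filter_card (t : Fin m) :
    Even (Finset.univ.filter fun x : Σ i : Fin c, Fin (n i) =>
        (t : ℕ) = (x.1 : ℕ) + 1 ∧ Odd ((H x.1).degree x.2)).card := by
  by_cases hex : ∃ i : Fin c, (t : ℕ) = (i : ℕ) + 1
  · obtain ⟨i, hi⟩ := hex
    have heq : (Finset.univ.filter fun x : Σ i : Fin c, Fin (n i) =>
        (t : ℕ) = (x.1 : ℕ) + 1 ∧ Odd ((H x.1).degree x.2)) =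
        (Finset.univ.filter fun w => Odd ((H i).degree w)).map
          ⟨Sigma.mk i, sigma_mk_injective⟩ := by
      ext ⟨i', w'⟩
      simp only [Finset.mem_filter, Finset.mem_univ, true_and, Finset.mem_map,
        Function.Embedding.coeFn_mk]
      constructor
      · rintro ⟨h1, h2⟩
        have hii : i = i' := Fin.ext (by omega)
        subst hii
        exact ⟨w', h2, rfl⟩
      · rintro ⟨w'', hw'', heq⟩
        cases heq
        exact ⟨hi, hw''⟩
    rw [heq, Finset.card_map]
    have := (H i).even_card_odd_degree_vertices
    convert this using 2
  · have heq : (Finset.univ.filter fun x : Σ i : Fin c, Fin (n i) =>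
        (t : ℕ) = (x.1 : ℕ) + 1 ∧ Odd ((H x.1).degree x.2)) = ∅ := by
      push_neg at hex
      ext x
      simp only [Finset.mem_filter, Finset.notMem_empty, iff_false]
      rintro ⟨-, h1, -⟩
      exact hex x.1 h1
    simp [heq]

lemma odd_degree_inr (hm : Even m) (h0 : 0 < m) (t : Fin m) :
    Odd ((bigG n H m).degree (Sum.inr t)) := by
  rw [degree_inr]
  exact (Nat.Even.sub_odd h0 hm odd_one).add_even (even_filter_card n H m t)

lemma nbhd_inl (i : Fin c) (w : Fin (n i)) (hx : (i : ℕ) + 1 < m) :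
    (bigG n H m).neighborFinset (Sum.inl ⟨i, w⟩) =
      (((H i).neighborFinset w).map
        ⟨fun w' => Sum.inl ⟨i, w'⟩, fun a b hab => by
          simpa using hab⟩) ∪
      (if Odd ((H i).degree w) then {Sum.inr (⟨(i : ℕ) + 1, hx⟩ : Fin m)} else ∅) := by
  ext v
  rcases v with ⟨i', w'⟩ | t
  · rw [SimpleGraph.mem_neighborFinset]
    constructor
    · intro h
      obtain ⟨h1, h2⟩ := (bigG_adj_inl_inl n H m ⟨i, w⟩ ⟨i', w'⟩).1 h
      dsimp only at h1
      subst h1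
      refine Finset.mem_union_left _ ?_
      exact Finset.mem_map.2 ⟨w', (SimpleGraph.mem_neighborFinset _ _ _).2 h2, rfl⟩
    · intro hv
      rcases Finset.mem_union.1 hv with hv1 | hv2
      · obtain ⟨w'', hw'', heq⟩ := Finset.mem_map.1 hv1
        replace heq := Sum.inl_injective heq
        cases heq
        exact (bigG_adj_inl_inl n H m _ _).2
          ⟨rfl, (SimpleGraph.mem_neighborFinset _ _ _).1 hw''⟩
      · exfalso
        split_ifs at hv2 with hodd
        · exact absurd (Finset.mem_singleton.1 hv2) (by simp)
        · exact absurd hv2 (Finset.notMem_empty _)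
  · rw [SimpleGraph.mem_neighborFinset]
    rw [show ((bigG n H m).Adj (Sum.inl ⟨i, w⟩) (Sum.inr t)) ↔
      ((t : ℕ) = (i : ℕ) + 1 ∧ Odd ((H i).degree w)) from Iff.rfl]
    constructor
    · rintro ⟨h1, h2⟩
      refine Finset.mem_union_right _ ?_
      rw [if_pos h2, Finset.mem_singleton]
      congr 1
      exact Fin.ext (by simpa using h1)
    · intro hv
      rcases Finset.mem_union.1 hv with hv1 | hv2
      · obtain ⟨w'', -, heq⟩ := Finset.mem_map.1 hv1
        exact absurd heq (by simp)
      · split_ifs at hv2 with hodd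
        · have h5 := Finset.mem_singleton.1 hv2
          have h6 : t = (⟨(i : ℕ) + 1, hx⟩ : Fin m) := Sum.inr_injective h5
          subst h6
          exact ⟨rfl, hodd⟩
        · exact absurd hv2 (Finset.notMem_empty _)

lemma even_degree_inl (i : Fin c) (w : Fin (n i)) (hx : (i : ℕ) + 1 < m) :
    Even ((bigG n H m).degree (Sum.inl ⟨i, w⟩)) := by
  rw [SimpleGraph.degree, nbhd_inl n H m i w hx, Finset.card_union_of_disjoint, Finset.card_map]
  · by_cases hodd : Odd ((H i).degree w)
    · rw [if_pos hodd, Finset.card_singleton]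
      exact hodd.add_one
    · rw [if_neg hodd, Finset.card_empty, Nat.add_zero]
      exact Nat.not_odd_iff_even.1 hodd
  · rw [Finset.disjoint_left]
    rintro x hx1 hx2
    obtain ⟨a, -, rfl⟩ := Finset.mem_map.1 hx1
    split_ifs at hx2 with hodd
    · exact absurd (Finset.mem_singleton.1 hx2) (by simp)
    · exact absurd hx2 (Finset.notMem_empty _)

end Big

lemma not_odd_degree_of_subsingleton {V : Type*} [Fintype V] [Subsingleton V]
    (G : SimpleGraph V) (v : V) : ¬ Odd (G.degree v) := by
  intro h
  have h0 := SimpleGraph.degree_lt_card_verts (G := G) v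
  have h1 : Fintype.card V ≤ 1 := Fintype.card_le_one_iff_subsingleton.2 ‹_›
  have h2 := Nat.odd_iff.1 h
  omega

lemma exists_fin_graph {V : Type*} [Fintype V] (G : SimpleGraph V) (hc : G.Connected) :
    ∃ (N : ℕ) (G' : SimpleGraph (Fin N)), G'.Connected ∧ grundy G' = grundy G := by
  let e : V ≃ Fin (Fintype.card V) := Fintype.equivFin V
  refine ⟨Fintype.card V, ⟨fun a b => G.Adj (e.symm a) (e.symm b), ⟨fun a b h => h.symm⟩,
    ⟨fun a h => G.loopless.irrefl _ h⟩⟩, ?_, ?_⟩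
  · have φ : G ≃g (⟨fun a b => G.Adj (e.symm a) (e.symm b), ⟨fun a b h => h.symm⟩,
        ⟨fun a h => G.loopless.irrefl _ h⟩⟩ : SimpleGraph (Fin (Fintype.card V))) := by
      refine ⟨e, ?_⟩
      intro a b
      simp
    exact (SimpleGraph.Iso.connected_iff φ).1 hc
  · refine grundy_congr G _ (fun v => e v) (fun a b hab => by simpa using hab) ?_ ?_ ?_
    · intro a b
      simp
    · intro w hw
      exact absurd (e.apply_symm_apply w) (hw (e.symm w))
    · intro w hw a
      exact absurd (e.apply_symm_apply w) (hw (e.symm w))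

/-- For every natural number `k` there is a finite connected graph whose
odd/odd vertex removal game has Grundy value `k`. -/
theorem exists_connected_graph_with_grundy (k : ℕ) :
    ∃ (n : ℕ) (G : SimpleGraph (Fin n)), G.Connected ∧ grundy G = k := by
  induction k using Nat.strong_induction_on with
  | _ k ih =>
  rcases k with _ | c
  · refine ⟨1, ⊥, ?_, ?_⟩
    · constructor
      intro a b
      have hab : a = b := Subsingleton.elim a b
      subst hab
      exact SimpleGraph.Reachable.refl a
    · exact grundy_eq_zero _ (not_odd_degree_of_subsingleton _)
  · -- step : realize grundy value c + 1
    have hIH : ∀ i : Fin c, ∃ (N : ℕ) (G : SimpleGraph (Fin N)),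
        G.Connected ∧ grundy G = (i : ℕ) + 1 := fun i => ih ((i : ℕ) + 1) (by omega)
    choose n H hconn hgr using hIH
    set m : ℕ := 2 * c + 2 with hm_def
    have hm_even : Even m := by exact ⟨c + 1, by omega⟩
    have hm_pos : 0 < m := by omega
    have hlt : ∀ i : Fin c, (i : ℕ) + 1 < m := fun i => by have := i.2; omega
    set B := bigG n H m with hB_def
    have hodd_exists : ∀ i : Fin c, ∃ w, Odd ((H i).degree w) := by
      intro i
      exact exists_odd_of_grundy_ne_zero (H i) (by rw [hgr i]; omega)
    -- parity of degrees in B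
    have hOddInr : ∀ t : Fin m, Odd (B.degree (Sum.inr t)) :=
      odd_degree_inr n H m hm_even hm_pos
    have hEvenInl : ∀ x : Σ i : Fin c, Fin (n i), Even (B.degree (Sum.inl x)) := by
      rintro ⟨i, w⟩
      exact even_degree_inl n H m i w (hlt i)
    -- options where the trigger has no copy: grundy 0
    have optzero : ∀ s : Fin m, (∀ i : Fin c, (s : ℕ) ≠ (i : ℕ) + 1) →
        grundy (delVert B (Sum.inr s)) = 0 := by
      intro s hs
      apply grundy_eq_zero
      intro v
      rw [Nat.not_odd_iff_even]
      rcases v with ⟨i', w'⟩ | t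
      · have hnadj : ¬ B.Adj (Sum.inl ⟨i', w'⟩) (Sum.inr s) := by
          rw [bigG_adj_inl_inr]
          rintro ⟨h1, -⟩
          exact hs i' h1
        rw [delVert_degree_of_not_adj B (by simp) hnadj]
        exact hEvenInl ⟨i', w'⟩
      · by_cases hts : t = s
        · subst hts
          rw [delVert_degree_self]
          exact Even.zero
        · rw [delVert_degree_of_adj B ((bigG_adj_inr_inr n H m t s).2 hts)]
          exact Nat.Odd.sub_odd (hOddInr t) odd_one
    -- options where the trigger matches copy i : grundy (i+1)
    have optcopy : ∀ (i : Fin c) (s : Fin m), (s : ℕ) = (i : ℕ) + 1 →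
        grundy (delVert B (Sum.inr s)) = (i : ℕ) + 1 := by
      intro i s hs
      rw [← hgr i]
      refine grundy_congr (H i) (delVert B (Sum.inr s))
        (fun w => Sum.inl ⟨i, w⟩) (fun a b hab => by simpa using hab) ?_ ?_ ?_
      · intro a b
        rw [delVert_adj]
        constructor
        · rintro ⟨hadj, -, -⟩
          obtain ⟨h1, h2⟩ := (bigG_adj_inl_inl n H m _ _).1 hadj
          exact h2
        · intro hab
          exact ⟨(bigG_adj_inl_inl n H m _ _).2 ⟨rfl, hab⟩, by simp, by simp⟩
      · rintro (⟨i', w'⟩ | t) hw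
        · have hne : i' ≠ i := by
            rintro rfl
            exact hw w' rfl
          have hnadj : ¬ B.Adj (Sum.inl ⟨i', w'⟩) (Sum.inr s) := by
            rw [bigG_adj_inl_inr]
            rintro ⟨h1, -⟩
            have h1' : (s : ℕ) = (i' : ℕ) + 1 := h1
            exact hne (Fin.ext (by omega))
          rw [delVert_degree_of_not_adj B (by simp) hnadj]
          exact hEvenInl ⟨i', w'⟩
        · by_cases hts : t = s
          · subst hts
            rw [delVert_degree_self]
            exact Even.zero
          · rw [delVert_degree_of_adj B ((bigG_adj_inr_inr n H m t s).2 hts)]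
            exact Nat.Odd.sub_odd (hOddInr t) odd_one
      · rintro (⟨i', w'⟩ | t) hw a hadj
        · have hne : i' ≠ i := by
            rintro rfl
            exact hw w' rfl
          obtain ⟨h1, -⟩ := (bigG_adj_inl_inl n H m _ _).1 hadj.1
          exact hne h1
        · obtain ⟨h1, -⟩ := (bigG_adj_inr_inl n H m _ _).1 hadj.1
          have h1' : (t : ℕ) = (i : ℕ) + 1 := h1
          have : t = s := Fin.ext (by omega)
          exact hadj.2.1 (by rw [this])
    -- all moves are triggers
    have hmove : ∀ v, Odd (B.degree v) → ∃ t : Fin m, v = Sum.inr t := by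
      rintro (x | t) hv
      · exact absurd hv (by rw [Nat.not_odd_iff_even]; exact hEvenInl x)
      · exact ⟨t, rfl⟩
    -- grundy of B
    have hgrB : grundy B = c + 1 := by
      rw [grundy_def' B]
      have hset : {nv | ∃ v : {v // Odd (B.degree v)}, grundy (delVert B v.1) = nv} =
          Set.Iio (c + 1) := by
        ext j
        simp only [Set.mem_setOf_eq, Set.mem_Iio]
        constructor
        · rintro ⟨⟨v, hv⟩, rfl⟩
          obtain ⟨t, rfl⟩ := hmove v hv
          by_cases hex : ∃ i : Fin c, (t : ℕ) = (i : ℕ) + 1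
          · obtain ⟨i, hi⟩ := hex
            rw [optcopy i t hi]
            have := i.2
            omega
          · push_neg at hex
            rw [optzero t hex]
            omega
        · intro hj
          rcases j with _ | j'
          · refine ⟨⟨Sum.inr ⟨0, hm_pos⟩, hOddInr _⟩, optzero _ ?_⟩
            intro i
            simp
          · have hj' : j' < c := by omega
            refine ⟨⟨Sum.inr ⟨j' + 1, by omega⟩, hOddInr _⟩, ?_⟩
            have := optcopy ⟨j', hj'⟩ ⟨j' + 1, by omega⟩ (by simp)
            simpa using this
      rw [hset]
      exact mexN_Iio (c + 1)
    -- B is connected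
    have hconnB : B.Connected := by
      have hreach : ∀ v, B.Reachable v (Sum.inr ⟨0, hm_pos⟩) := by
        have htrig : ∀ t : Fin m, B.Reachable (Sum.inr t) (Sum.inr ⟨0, hm_pos⟩) := by
          intro t
          by_cases ht : t = ⟨0, hm_pos⟩
          · rw [ht]
          · exact ((bigG_adj_inr_inr n H m t _).2 ht).reachable
        rintro (⟨i, w⟩ | t)
        · obtain ⟨w₀, hw₀⟩ := hodd_exists i
          have r1 : B.Reachable (Sum.inl ⟨i, w⟩) (Sum.inl ⟨i, w₀⟩) :=
            SimpleGraph.Reachable.map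
              (⟨fun w' => Sum.inl ⟨i, w'⟩,
                fun hab => (bigG_adj_inl_inl n H m _ _).2 ⟨rfl, hab⟩⟩ : (H i) →g B)
              ((hconn i).preconnected w w₀)
          have r2 : B.Adj (Sum.inl ⟨i, w₀⟩) (Sum.inr ⟨(i : ℕ) + 1, hlt i⟩) :=
            (bigG_adj_inl_inr n H m _ _).2 ⟨rfl, hw₀⟩
          exact (r1.trans r2.reachable).trans (htrig _)
        · exact htrig t
      constructor
      intro u v
      exact (hreach u).trans (hreach v).symm
    -- transport to Fin N
    obtain ⟨N, G', hcG', hgG'⟩ := exists_fin_graph B hconnB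
    exact ⟨N, G', hcG', by rw [hgG', hgrB]⟩
end
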